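/- Let K be the reference prism with bottom face F₄ = {(x,y,-1) : x,y ≥ 0, x+y ≤ 1} and top face F₅ = {(x,y,1) : x,y ≥ 0, x+y ≤ 1}. For a function v on K, let I_{F₄}v (respectively I_{F₅}v) be the unique element of span{f₁,f₂,f₃,f₄} (functions of (x,y) only) interpolating v at V₁,V₂,V₃,M₄ (respectively at V₄,V₅,V₆,M₅). Then for every v in P_K = P₂(ℝ³) ⊕ span{φ}, the function of (x,y) given by v(x,y,-1) − (I_{F₄}v)(x,y) equals the function v(x,y,1) − (I_{F₅}v)(x,y). -/
import Mathlib


open MvPolynomial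

lemma diff_affine (p : MvPolynomial (Fin 3) ℝ) (hp : p.totalDegree ≤ 2) :
    ∃ α β γ : ℝ, ∀ x y : ℝ,
      eval ![x,y,1] p - eval ![x,y,-1] p = α + β*x + γ*y := by
  have key : ∀ d ∈ p.support, ∃ α β γ : ℝ, ∀ x y : ℝ,
      eval ![x,y,(1:ℝ)] (monomial d (coeff d p))
        - eval ![x,y,(-1:ℝ)] (monomial d (coeff d p)) = α + β*x + γ*y := by
    intro d hd
    have hdeg : d 0 + d 1 + d 2 ≤ 2 := by
      have h := le_totalDegree hd
      have : (d.sum fun _ e => e) = d 0 + d 1 + d 2 := by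
        rw [Finsupp.sum_fintype _ _ (fun _ => rfl), Fin.sum_univ_three]
      omega
    have heval : ∀ (x y z : ℝ), eval ![x,y,z] (monomial d (coeff d p))
        = coeff d p * (x ^ d 0 * y ^ d 1 * z ^ d 2) := by
      intro x y z
      rw [eval_monomial, Finsupp.prod_fintype _ _ (fun _ => pow_zero _),
        Fin.prod_univ_three]
      simp [Matrix.cons_val_zero, Matrix.cons_val_one]
    set c := coeff d p with hc
    set n0 := d 0 with hn0
    set n1 := d 1 with hn1
    set n2 := d 2 with hn2
    have b0 : n0 ≤ 2 := by omega
    have b1 : n1 ≤ 2 := by omega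
    have b2 : n2 ≤ 2 := by omega
    interval_cases n0 <;> interval_cases n1 <;> interval_cases n2 <;>
      first
      | (exfalso; omega)
      | (refine ⟨0, 0, 0, fun x y => ?_⟩; rw [heval, heval]; ring1)
      | (refine ⟨2*c, 0, 0, fun x y => ?_⟩; rw [heval, heval]; ring1)
      | (refine ⟨0, 2*c, 0, fun x y => ?_⟩; rw [heval, heval]; ring1)
      | (refine ⟨0, 0, 2*c, fun x y => ?_⟩; rw [heval, heval]; ring1)
  have hsum := Finset.sum_induction (fun d => monomial d (coeff d p))
    (fun q => ∃ α β γ : ℝ, ∀ x y : ℝ,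
      eval ![x,y,(1:ℝ)] q - eval ![x,y,(-1:ℝ)] q = α + β*x + γ*y)
    (fun a b ⟨α1, β1, γ1, h1⟩ ⟨α2, β2, γ2, h2⟩ =>
      ⟨α1+α2, β1+β2, γ1+γ2, fun x y => by
        simp only [map_add]; linear_combination h1 x y + h2 x y⟩)
    ⟨0, 0, 0, fun x y => by simp⟩ key
  rwa [← p.as_sum] at hsum


noncomputable section

def phi (x y z : ℝ) : ℝ :=
  (5/12) * z * (z^2 - 1) + z * ((1-x-y)*x + x*y + y*(1-x-y))

/-- Membership in `P_K = P₂(ℝ³) ⊕ span{φ}`. -/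
def InPK (v : ℝ → ℝ → ℝ → ℝ) : Prop :=
  ∃ (p : MvPolynomial (Fin 3) ℝ) (c : ℝ), p.totalDegree ≤ 2 ∧
    ∀ x y z : ℝ, v x y z = MvPolynomial.eval ![x, y, z] p + c * phi x y z

def f1 (x y : ℝ) : ℝ := (1-x-y) - ((1-x-y)*x + x*y + y*(1-x-y))
def f2 (x y : ℝ) : ℝ := x - ((1-x-y)*x + x*y + y*(1-x-y))
def f3 (x y : ℝ) : ℝ := y - ((1-x-y)*x + x*y + y*(1-x-y))
def f4 (x y : ℝ) : ℝ := 3 * ((1-x-y)*x + x*y + y*(1-x-y))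

/-- Membership in `span{f₁,f₂,f₃,f₄}`. -/
def InSpanF (g : ℝ → ℝ → ℝ) : Prop :=
  ∃ a b c d : ℝ, ∀ x y : ℝ,
    g x y = a * f1 x y + b * f2 x y + c * f3 x y + d * f4 x y

/-- For every `v ∈ P_K`, the interpolation residuals on the bottom and top
faces coincide: `v|_{F₄} − I_{F₄}v = v|_{F₅} − I_{F₅}v`. Here `g₄ = I_{F₄}v`
(resp. `g₅ = I_{F₅}v`) is the element of `span{f₁,f₂,f₃,f₄}` interpolating `v`
at `V₁,V₂,V₃,M₄` (resp. `V₄,V₅,V₆,M₅`). -/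
theorem top_bottom_residual_equal (v : ℝ → ℝ → ℝ → ℝ) (hv : InPK v)
    (g4 g5 : ℝ → ℝ → ℝ) (hg4 : InSpanF g4) (hg5 : InSpanF g5)
    (h41 : g4 0 0 = v 0 0 (-1)) (h42 : g4 1 0 = v 1 0 (-1))
    (h43 : g4 0 1 = v 0 1 (-1)) (h44 : g4 (1/3) (1/3) = v (1/3) (1/3) (-1))
    (h51 : g5 0 0 = v 0 0 1) (h52 : g5 1 0 = v 1 0 1)
    (h53 : g5 0 1 = v 0 1 1) (h54 : g5 (1/3) (1/3) = v (1/3) (1/3) 1) :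
    ∀ x y : ℝ, v x y (-1) - g4 x y = v x y 1 - g5 x y := by
  obtain ⟨p, c, hdeg, hval⟩ := hv
  obtain ⟨a4, b4, c4, d4, h4⟩ := hg4
  obtain ⟨a5, b5, c5, d5, h5⟩ := hg5
  obtain ⟨α, β, γ, haff⟩ := diff_affine p hdeg
  intro x y
  rw [hval, hval, h4, h5]
  rw [h4, hval] at h41 h42 h43 h44
  rw [h5, hval] at h51 h52 h53 h54
  simp only [f1, f2, f3, f4, phi] at *
  set Q := (1-x-y)*x + x*y + y*(1-x-y) with hQ
  linear_combination -haff x y + ((1-x-y) - Q) * haff 0 0 + (x - Q) * haff 1 0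
    + (y - Q) * haff 0 1 + (3*Q) * haff (1/3) (1/3)
    - ((1-x-y) - Q) * (h41 - h51) - (x - Q) * (h42 - h52)
    - (y - Q) * (h43 - h53) - (3*Q) * (h44 - h54)
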